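/- If |Z| = 1, then the scheduling-level conflict graph, hybrid conflict graph, and reduced (signal-level) conflict graph on A = C × U × B × Z have the following relation on size-|C|·|B| independent sets: every size-|C|·|B| independent set of the reduced graph in which each user appears at most once is an independent set of all three graphs; moreover, in the reduced graph with |Z| = 1, any independent set assigns each user to at most one association, hence the three graphs have exactly the same independent sets of size |C|·|B|. -/
import Mathlib


variable {C U B Z : Type*}

/-- Scheduling-level conflict graph adjacency. -/
def schedAdj (a a' : C × U × B × Z) : Prop :=
  a ≠ a' ∧ ((a.2.1 = a'.2.1 ∧ a.1 ≠ a'.1) ∨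
    (a.1, a.2.2.1, a.2.2.2) = (a'.1, a'.2.2.1, a'.2.2.2) ∨
    (a.2.1 = a'.2.1 ∧ a.2.2.1 ≠ a'.2.2.1))

/-- Hybrid conflict graph adjacency. -/
def hybAdj (a a' : C × U × B × Z) : Prop :=
  a ≠ a' ∧ ((a.2.1 = a'.2.1 ∧ a.1 ≠ a'.1) ∨
    (a.1, a.2.2.1, a.2.2.2) = (a'.1, a'.2.2.1, a'.2.2.2) ∨
    (a.2.1 = a'.2.1 ∧ a.2.2.2 = a'.2.2.2))

/-- Reduced (signal-level) conflict graph adjacency. -/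
def sigAdj (a a' : C × U × B × Z) : Prop :=
  a ≠ a' ∧ ((a.1, a.2.2.1, a.2.2.2) = (a'.1, a'.2.2.1, a'.2.2.2) ∨
    (a.2.1 = a'.2.1 ∧ a.2.2.2 = a'.2.2.2))

theorem stmt19 [Fintype C] [Fintype U] [Fintype B] [Fintype Z]
    [Nonempty C] [Nonempty U] [Nonempty B] [Nonempty Z]
    (hZ : Fintype.card Z = 1) :
    ∀ S : Finset (C × U × B × Z), S.card = Fintype.card C * Fintype.card B →
      (((∀ a ∈ S, ∀ a' ∈ S, ¬ sigAdj a a') →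
          ∀ a ∈ S, ∀ a' ∈ S, a ≠ a' → a.2.1 ≠ a'.2.1) ∧
       ((∀ a ∈ S, ∀ a' ∈ S, ¬ schedAdj a a') ↔
          (∀ a ∈ S, ∀ a' ∈ S, ¬ sigAdj a a')) ∧
       ((∀ a ∈ S, ∀ a' ∈ S, ¬ hybAdj a a') ↔
          (∀ a ∈ S, ∀ a' ∈ S, ¬ sigAdj a a'))) := by
  intro S hS
  have hz : ∀ z z' : Z, z = z' := fun z z' =>
    Fintype.card_le_one_iff.mp (le_of_eq hZ) z z'
  have key : ∀ a a' : C × U × B × Z, a ≠ a' → a.2.1 = a'.2.1 →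
      sigAdj a a' := fun a a' hne hu => ⟨hne, Or.inr ⟨hu, hz _ _⟩⟩
  refine ⟨fun hind a ha a' ha' hne hu => hind a ha a' ha' (key a a' hne hu), ?_, ?_⟩
  · constructor
    · intro h a ha a' ha' hsig
      obtain ⟨hne, hor⟩ := hsig
      apply h a ha a' ha'
      rcases hor with htr | ⟨hu, hzz⟩
      · exact ⟨hne, Or.inr (Or.inl htr)⟩
      · by_cases hc : a.1 = a'.1
        · by_cases hb : a.2.2.1 = a'.2.2.1
          · exfalso; apply hne
            obtain ⟨c,u,b,z⟩ := a; obtain ⟨c',u',b',z'⟩ := a'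
            simp_all
          · exact ⟨hne, Or.inr (Or.inr ⟨hu, hb⟩)⟩
        · exact ⟨hne, Or.inl ⟨hu, hc⟩⟩
    · intro h a ha a' ha' hsched
      obtain ⟨hne, hor⟩ := hsched
      apply h a ha a' ha'
      rcases hor with ⟨hu,_⟩ | htr | ⟨hu,_⟩
      · exact key a a' hne hu
      · exact ⟨hne, Or.inl htr⟩
      · exact key a a' hne hu
  · constructor
    · intro h a ha a' ha' hsig
      obtain ⟨hne, hor⟩ := hsig
      apply h a ha a' ha'
      rcases hor with htr | ⟨hu, hzz⟩
      · exact ⟨hne, Or.inr (Or.inl htr)⟩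
      · exact ⟨hne, Or.inr (Or.inr ⟨hu, hzz⟩)⟩
    · intro h a ha a' ha' hhyb
      obtain ⟨hne, hor⟩ := hhyb
      apply h a ha a' ha'
      rcases hor with ⟨hu,_⟩ | htr | ⟨hu,_⟩
      · exact key a a' hne hu
      · exact ⟨hne, Or.inl htr⟩
      · exact key a a' hne hu
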